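/- Let F = F_I + F_R, where F_I(t) = p_1(t)·exp(i·ξ_1·t) + … + p_n(t)·exp(i·ξ_n·t) with ξ_1, …, ξ_n distinct real numbers, and F_R(t) = q_1(t)·exp(z_1·t) + … + q_m(t)·exp(z_m·t) with z_1, …, z_m distinct complex numbers each having nonzero real part, and p_1, …, p_n, q_1, …, q_m complex polynomials. If sup_{t ∈ ℝ} |F(t)| < M for some M > 0, then q_1 = … = q_m = 0 (so F_R ≡ 0) and p_1, …, p_n are constants; in particular F is a generalized trigonometric polynomial and hence belongs to AP. -/

import Mathlib

open scoped ENNReal NNReal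

noncomputable section

namespace BddTrigAux

open Complex Polynomial Finset

lemma coeff_taylor_natDegree (c : ℂ) (r : ℂ[X]) :
    (Polynomial.taylor c r).coeff r.natDegree = r.leadingCoeff := by
  have h1 : (Polynomial.taylor c r).natDegree = r.natDegree := natDegree_taylor r c
  have h2 : (Polynomial.taylor c r).leadingCoeff = r.leadingCoeff := by
    rw [taylor_apply, leadingCoeff_comp (by simp : (X + C c).natDegree ≠ 0)]
    simp
  rw [← h2, Polynomial.leadingCoeff, h1]

lemma natDegree_eq_zero_of_taylor_fixed {r : ℂ[X]} {c : ℂ} (hc : c ≠ 0)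
    (h : Polynomial.taylor c r = r) : r.natDegree = 0 := by
  have key : ∀ n : ℕ, r.eval ((n : ℂ) * c) = r.eval 0 := by
    intro n
    induction n with
    | zero => simp
    | succ k ih =>
      have ht := taylor_eval c r ((k : ℂ) * c)
      rw [h] at ht
      have : ((k : ℕ) + 1 : ℂ) * c = (k : ℂ) * c + c := by push_cast; ring
      rw [show (((k+1 : ℕ)) : ℂ) * c = (k : ℂ) * c + c by push_cast; ring, ← ht, ih]
  have hz : r - C (r.eval 0) = 0 := by
    apply eq_zero_of_infinite_isRoot
    apply Set.infinite_of_injective_forall_mem (f := fun n : ℕ => (n : ℂ) * c)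
    · intro a b hab
      have : (a : ℂ) = b := mul_right_cancel₀ hc hab
      exact_mod_cast this
    · intro n
      simp only [Set.mem_setOf_eq, IsRoot, eval_sub, eval_C, key n, sub_self]
  have : r = C (r.eval 0) := by rwa [sub_eq_zero] at hz
  rw [this]; simp

lemma natDegree_taylor_sub_lt (r : ℂ[X]) (c : ℂ)
    (h1 : Polynomial.taylor c r - r ≠ 0) :
    (Polynomial.taylor c r - r).natDegree < r.natDegree := by
  set u := Polynomial.taylor c r - r with hu
  have hle : u.natDegree ≤ r.natDegree :=
    (natDegree_sub_le _ _).trans (by simp [natDegree_taylor])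
  have hne : u.natDegree ≠ r.natDegree := by
    intro he
    have hlc : u.leadingCoeff = 0 := by
      rw [Polynomial.leadingCoeff, he, hu, coeff_sub, coeff_taylor_natDegree,
        ← Polynomial.leadingCoeff, sub_self]
    exact h1 (leadingCoeff_eq_zero.mp hlc)
  omega

lemma bounded_poly : ∀ (N : ℕ) (r : ℂ[X]), r.natDegree ≤ N →
    ∀ K : ℝ, (∀ t : ℝ, ‖r.eval ↑t‖ ≤ K) → r.natDegree = 0 := by
  intro N
  induction N with
  | zero => intro r h _ _; omega
  | succ N ih =>
    intro r hr K hb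
    set u := Polynomial.taylor (1 : ℂ) r - r with hu
    by_cases h1 : u = 0
    · exact natDegree_eq_zero_of_taylor_fixed one_ne_zero (by rwa [sub_eq_zero] at h1)
    · exfalso
      have hlt := natDegree_taylor_sub_lt r 1 h1
      rw [← hu] at hlt
      have hb1 : ∀ t : ℝ, ‖u.eval ↑t‖ ≤ K + K := by
        intro t
        have e : u.eval ↑t = r.eval ((t : ℂ) + 1) - r.eval ↑t := by
          simp [hu, taylor_eval]
        rw [e]
        have := hb (t + 1)
        rw [show ((t + 1 : ℝ) : ℂ) = (t : ℂ) + 1 by push_cast; ring] at this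
        exact (norm_sub_le _ _).trans (add_le_add this (hb t))
      have h0 := ih u (by omega) (K + K) hb1
      obtain ⟨a, ha⟩ := Polynomial.natDegree_eq_zero.mp h0
      have hane : a ≠ 0 := fun h => h1 (by rw [← ha, h, map_zero])
      have key : ∀ k : ℕ, r.eval (k : ℂ) = r.eval 0 + k * a := by
        intro k
        induction k with
        | zero => simp
        | succ j ihj =>
          have hueval : u.eval (j : ℂ) = a := by rw [← ha]; simp
          have e2 : r.eval ((j : ℂ) + 1) = r.eval (j : ℂ) + a := by
            have : u.eval (j : ℂ) = r.eval ((j : ℂ) + 1) - r.eval (j : ℂ) := by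
              simp [hu, taylor_eval]
            rw [this] at hueval
            linear_combination hueval
          push_cast
          rw [e2, ihj]; ring
      obtain ⟨k, hk⟩ := exists_nat_gt ((K + ‖r.eval 0‖) / ‖a‖)
      have hKb := hb (k : ℝ)
      rw [show (((k : ℝ)) : ℂ) = (k : ℂ) by push_cast; ring, key k] at hKb
      have hnorm : (k : ℝ) * ‖a‖ - ‖r.eval 0‖ ≤ ‖r.eval 0 + (k : ℂ) * a‖ := by
        have h3 : ‖(k : ℂ) * a‖ ≤ ‖r.eval 0 + (k : ℂ) * a‖ + ‖r.eval 0‖ := by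
          have := norm_sub_le (r.eval 0 + (k : ℂ) * a) (r.eval 0)
          simpa using this
        have h4 : ‖(k : ℂ) * a‖ = (k : ℝ) * ‖a‖ := by
          rw [norm_mul]; norm_num
        linarith
      have hpos : 0 < ‖a‖ := norm_pos_iff.mpr hane
      have : K + ‖r.eval 0‖ < (k : ℝ) * ‖a‖ := by
        rw [div_lt_iff₀ hpos] at hk; linarith
      linarith

lemma norm_term (r : ℂ[X]) (μ : ℂ) (t : ℝ) :
    ‖r.eval ↑t * Complex.exp (μ * ↑t)‖ = ‖r.eval ↑t‖ * Real.exp (μ.re * t) := by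
  rw [norm_mul, Complex.norm_exp]
  congr 2
  simp [Complex.mul_re]

lemma const_case {a : ℂ} (ha : a ≠ 0) (μ : ℂ) (K : ℝ)
    (hb : ∀ t : ℝ, ‖a‖ * Real.exp (μ.re * t) ≤ K) : μ.re = 0 := by
  by_contra hre
  have hpos : 0 < ‖a‖ := norm_pos_iff.mpr ha
  have hK : 0 < K := by
    have hb0 := hb 0
    rw [mul_zero, Real.exp_zero, mul_one] at hb0
    linarith
  set t₀ : ℝ := Real.log ((K + 1) / ‖a‖) / μ.re with ht₀
  have harg : 0 < (K + 1) / ‖a‖ := div_pos (by linarith) hpos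
  have he : Real.exp (μ.re * t₀) = (K + 1) / ‖a‖ := by
    rw [ht₀, mul_div_cancel₀ _ hre, Real.exp_log harg]
  have := hb t₀
  rw [he, mul_div_cancel₀ _ (ne_of_gt hpos)] at this
  linarith

lemma single_term : ∀ (N : ℕ) (r : ℂ[X]), r.natDegree ≤ N → r ≠ 0 → ∀ (μ : ℂ) (K : ℝ),
    (∀ t : ℝ, ‖r.eval ↑t * Complex.exp (μ * ↑t)‖ ≤ K) → μ.re = 0 := by
  intro N
  induction N with
  | zero =>
    intro r hdeg hr μ K hb
    obtain ⟨a, ha⟩ := Polynomial.natDegree_eq_zero.mp (Nat.le_zero.mp hdeg)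
    have hane : a ≠ 0 := fun h => hr (by rw [← ha, h, map_zero])
    apply const_case hane μ K
    intro t
    have := hb t
    rwa [norm_term, ← ha, eval_C] at this
  | succ N ih =>
    intro r hdeg hr μ K hb
    set u := Polynomial.taylor (1 : ℂ) r - r with hu
    by_cases h1 : u = 0
    · have h0 : r.natDegree = 0 := natDegree_eq_zero_of_taylor_fixed one_ne_zero (by rwa [sub_eq_zero] at h1)
      obtain ⟨a, ha⟩ := Polynomial.natDegree_eq_zero.mp h0
      have hane : a ≠ 0 := fun h => hr (by rw [← ha, h, map_zero])
      apply const_case hane μ K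
      intro t
      have := hb t
      rwa [norm_term, ← ha, eval_C] at this
    · have hlt := natDegree_taylor_sub_lt r 1 h1
      rw [← hu] at hlt
      set K' : ℝ := ‖Complex.exp (-μ)‖ * (K + ‖Complex.exp μ‖ * K) with hK'
      apply ih u (by omega) h1 μ K'
      intro t
      have e : u.eval ↑t * Complex.exp (μ * ↑t) =
          Complex.exp (-μ) * (r.eval ((t : ℂ) + 1) * Complex.exp (μ * ((t : ℂ) + 1))
            - Complex.exp μ * (r.eval ↑t * Complex.exp (μ * ↑t))) := by
        have hue : u.eval ↑t = r.eval ((t : ℂ) + 1) - r.eval ↑t := by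
          simp [hu, taylor_eval]
        have h2 : Complex.exp (μ * ((t : ℂ) + 1)) = Complex.exp (μ * ↑t) * Complex.exp μ := by
          rw [← Complex.exp_add]; ring_nf
        have h3 : Complex.exp (-μ) * Complex.exp μ = 1 := by
          rw [← Complex.exp_add]; simp
        rw [hue, h2]
        linear_combination (-(Complex.exp (μ * ↑t)) *
          (r.eval ((t : ℂ) + 1) - r.eval ↑t)) * h3
      rw [e]
      have hb2 := hb (t + 1)
      rw [show ((t + 1 : ℝ) : ℂ) = (t : ℂ) + 1 by push_cast; ring] at hb2
      rw [norm_mul, hK']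
      apply mul_le_mul_of_nonneg_left _ (norm_nonneg _)
      calc ‖r.eval ((t : ℂ) + 1) * Complex.exp (μ * ((t : ℂ) + 1))
            - Complex.exp μ * (r.eval ↑t * Complex.exp (μ * ↑t))‖
          ≤ ‖r.eval ((t : ℂ) + 1) * Complex.exp (μ * ((t : ℂ) + 1))‖
            + ‖Complex.exp μ * (r.eval ↑t * Complex.exp (μ * ↑t))‖ := norm_sub_le _ _
        _ ≤ K + ‖Complex.exp μ‖ * K := by
            refine add_le_add hb2 ?_
            rw [norm_mul]
            exact mul_le_mul_of_nonneg_left (hb t) (norm_nonneg _)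

lemma collapse {ι : Type} [Fintype ι] [DecidableEq ι] (μ : ι → ℂ) (i0 : ι)
    (r : ι → ℂ[X]) (K : ℝ)
    (hK : ∀ t : ℝ, ‖∑ j, (r j).eval ↑t * Complex.exp (μ j * ↑t)‖ ≤ K)
    (hz : ∀ j, j ≠ i0 → r j = 0) :
    ∀ t : ℝ, ‖(r i0).eval ↑t * Complex.exp (μ i0 * ↑t)‖ ≤ K := by
  intro t
  have := hK t
  rwa [Finset.sum_eq_single i0
    (fun j _ hj => by rw [hz j hj]; simp)
    (fun h => absurd (Finset.mem_univ i0) h)] at this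

lemma reduce {ι : Type} [Fintype ι] [DecidableEq ι] (μ : ι → ℂ)
    (hμ : Function.Injective μ) (i0 : ι) :
    ∀ (W : ℕ) (r : ι → ℂ[X]),
      (∑ j ∈ Finset.univ.erase i0, ((r j).natDegree + if r j = 0 then 0 else 1)) ≤ W →
      ∀ K : ℝ, (∀ t : ℝ, ‖∑ j, (r j).eval ↑t * Complex.exp (μ j * ↑t)‖ ≤ K) →
      r i0 ≠ 0 →
      ∃ (r' : ℂ[X]) (K' : ℝ), r' ≠ 0 ∧ r'.natDegree = (r i0).natDegree ∧
        ∀ t : ℝ, ‖r'.eval ↑t * Complex.exp (μ i0 * ↑t)‖ ≤ K' := by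
  intro W
  induction W with
  | zero =>
    intro r hW K hK h0
    refine ⟨r i0, K, h0, rfl, ?_⟩
    apply collapse μ i0 r K hK
    intro j hj
    by_contra hne
    have hmem : j ∈ Finset.univ.erase i0 := Finset.mem_erase.mpr ⟨hj, Finset.mem_univ j⟩
    have hterm : 1 ≤ (r j).natDegree + if r j = 0 then 0 else 1 := by
      simp [hne]
    have hs : ((r j).natDegree + if r j = 0 then 0 else 1) ≤
        ∑ j ∈ Finset.univ.erase i0, ((r j).natDegree + if r j = 0 then 0 else 1) :=
      Finset.single_le_sum (f := fun j => ((r j).natDegree + if r j = 0 then 0 else 1))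
        (fun _ _ => Nat.zero_le _) hmem
    omega
  | succ W ih =>
    intro r hW K hK h0
    by_cases hex : ∃ ν ∈ Finset.univ.erase i0, r ν ≠ 0
    case neg =>
      refine ⟨r i0, K, h0, rfl, ?_⟩
      apply collapse μ i0 r K hK
      intro j hj
      by_contra hne
      exact hex ⟨j, Finset.mem_erase.mpr ⟨hj, Finset.mem_univ j⟩, hne⟩
    case pos =>
    obtain ⟨ν, hν, hrν⟩ := hex
    have hνne : ν ≠ i0 := (Finset.mem_erase.mp hν).1
    have hμsub : μ i0 - μ ν ≠ 0 := sub_ne_zero.mpr fun h => hνne (hμ h).symm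
    have hnpos : 0 < ‖μ i0 - μ ν‖ := norm_pos_iff.mpr hμsub
    set h : ℝ := Real.pi / ‖μ i0 - μ ν‖ with hh
    have hhpos : 0 < h := div_pos Real.pi_pos hnpos
    have hexp_ne : Complex.exp (μ i0 * ↑h) ≠ Complex.exp (μ ν * ↑h) := by
      intro hcontra
      rw [Complex.exp_eq_exp_iff_exists_int] at hcontra
      obtain ⟨k, hk⟩ := hcontra
      have heq : (μ i0 - μ ν) * ↑h = ↑k * (2 * ↑Real.pi * Complex.I) := by
        linear_combination hk
      have h1 : ‖(μ i0 - μ ν) * ↑h‖ = Real.pi := by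
        rw [norm_mul, Complex.norm_real, Real.norm_eq_abs, abs_of_pos hhpos, hh,
          mul_div_cancel₀ _ (ne_of_gt hnpos)]
      have h2 : ‖↑k * (2 * ↑Real.pi * Complex.I)‖ = |(k : ℝ)| * (2 * Real.pi) := by
        rw [norm_mul, norm_mul, norm_mul, Complex.norm_intCast, Complex.norm_two,
          Complex.norm_real, Real.norm_eq_abs, Complex.norm_I, abs_of_pos Real.pi_pos, mul_one]
      rw [heq, h2] at h1
      rcases eq_or_ne k 0 with hk0 | hk0
      · rw [hk0] at h1; simp at h1
        exact Real.pi_ne_zero h1.symm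
      · have : (1 : ℝ) ≤ |(k : ℝ)| := by
          rw [← Int.cast_abs]
          exact_mod_cast Int.one_le_abs hk0
        nlinarith [Real.pi_pos]
    set c : ι → ℂ := fun j => Complex.exp (μ j * ↑h) with hc
    have hcne : ∀ j, c j ≠ 0 := fun j => Complex.exp_ne_zero _
    set r' : ι → ℂ[X] :=
      fun j => C (c j) * Polynomial.taylor (↑h : ℂ) (r j) - C (c ν) * r j with hr'
    -- basic facts
    have hr'_zero : ∀ j, r j = 0 → r' j = 0 := by
      intro j hj; simp [hr', hj]
    have hdeg_le : ∀ j, (r' j).natDegree ≤ (r j).natDegree := by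
      intro j
      refine (natDegree_sub_le _ _).trans (max_le ?_ ?_)
      · exact (natDegree_C_mul_le _ _).trans (le_of_eq (natDegree_taylor _ _))
      · exact natDegree_C_mul_le _ _
    -- i0 facts
    have hcoeff : (r' i0).coeff (r i0).natDegree = (c i0 - c ν) * (r i0).leadingCoeff := by
      rw [hr']
      simp only [coeff_sub, coeff_C_mul, coeff_taylor_natDegree]
      rw [Polynomial.leadingCoeff]
      ring
    have hlcne : (r' i0).coeff (r i0).natDegree ≠ 0 := by
      rw [hcoeff]
      exact mul_ne_zero (sub_ne_zero.mpr hexp_ne) (leadingCoeff_ne_zero.mpr h0)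
    have hr'i0ne : r' i0 ≠ 0 := fun hq => hlcne (by rw [hq, coeff_zero])
    have hr'i0deg : (r' i0).natDegree = (r i0).natDegree :=
      le_antisymm (hdeg_le i0) (le_natDegree_of_ne_zero hlcne)
    -- measure decreases
    have hmeas : (∑ j ∈ Finset.univ.erase i0,
        ((r' j).natDegree + if r' j = 0 then 0 else 1)) ≤ W := by
      have hν_drop : ((r' ν).natDegree + if r' ν = 0 then 0 else 1) + 1 ≤
          (r ν).natDegree + if r ν = 0 then 0 else 1 := by
        have hfac : r' ν = C (c ν) * (Polynomial.taylor (↑h : ℂ) (r ν) - r ν) := by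
          rw [hr']; ring
        set u := Polynomial.taylor (↑h : ℂ) (r ν) - r ν with hu2
        by_cases hu0 : u = 0
        · rw [hfac, hu0, mul_zero]
          simp [hrν]
        · have hlt := natDegree_taylor_sub_lt (r ν) (↑h : ℂ)
          rw [← hu2] at hlt
          have hlt2 := hlt hu0
          have hne2 : r' ν ≠ 0 := by
            rw [hfac]
            exact mul_ne_zero (by simpa using hcne ν) hu0
          have hdege : (r' ν).natDegree = u.natDegree := by
            rw [hfac, natDegree_C_mul (hcne ν)]
          rw [if_neg hne2, if_neg hrν]
          omega
      have hrest : ∀ j ∈ (Finset.univ.erase i0).erase ν,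
          ((r' j).natDegree + if r' j = 0 then 0 else 1) ≤
          ((r j).natDegree + if r j = 0 then 0 else 1) := by
        intro j _
        by_cases hj0 : r j = 0
        · simp [hr'_zero j hj0, hj0]
        · have := hdeg_le j
          by_cases hj0' : r' j = 0 <;> simp [hj0, hj0'] <;> omega
      have hsplit : ((r' ν).natDegree + if r' ν = 0 then 0 else 1) +
          ∑ j ∈ (Finset.univ.erase i0).erase ν, ((r' j).natDegree + if r' j = 0 then 0 else 1) =
          ∑ j ∈ Finset.univ.erase i0, ((r' j).natDegree + if r' j = 0 then 0 else 1) := by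
        have := Finset.add_sum_erase (Finset.univ.erase i0)
          (fun j => ((r' j).natDegree + if r' j = 0 then 0 else 1)) hν
        simpa using this
      have hsplit2 : ((r ν).natDegree + if r ν = 0 then 0 else 1) +
          ∑ j ∈ (Finset.univ.erase i0).erase ν, ((r j).natDegree + if r j = 0 then 0 else 1) =
          ∑ j ∈ Finset.univ.erase i0, ((r j).natDegree + if r j = 0 then 0 else 1) := by
        have := Finset.add_sum_erase (Finset.univ.erase i0)
          (fun j => ((r j).natDegree + if r j = 0 then 0 else 1)) hν
        simpa using this
      have hsum_rest := Finset.sum_le_sum hrest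
      omega
    -- boundedness
    set K' : ℝ := K + ‖c ν‖ * K with hK'
    have hbd' : ∀ t : ℝ, ‖∑ j, (r' j).eval ↑t * Complex.exp (μ j * ↑t)‖ ≤ K' := by
      intro t
      have sum_eq : ∑ j, (r' j).eval ↑t * Complex.exp (μ j * ↑t) =
          (∑ j, (r j).eval (↑(t + h) : ℂ) * Complex.exp (μ j * (↑(t + h) : ℂ)))
            - c ν * ∑ j, (r j).eval ↑t * Complex.exp (μ j * ↑t) := by
        rw [Finset.mul_sum, ← Finset.sum_sub_distrib]
        apply Finset.sum_congr rfl
        intro j _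
        have hcast : ((t + h : ℝ) : ℂ) = (t : ℂ) + (h : ℂ) := by push_cast; ring
        rw [hcast]
        have he : Complex.exp (μ j * ((t : ℂ) + (h : ℂ))) =
            Complex.exp (μ j * ↑t) * Complex.exp (μ j * ↑h) := by
          rw [← Complex.exp_add]; ring_nf
        have ht : (Polynomial.taylor (↑h : ℂ) (r j)).eval ↑t = (r j).eval ((t : ℂ) + ↑h) :=
          taylor_eval _ _ _
        simp only [hr', eval_sub, eval_mul, eval_C, ht, he, hc]
        ring
      rw [sum_eq, hK']
      refine (norm_sub_le _ _).trans (add_le_add (hK (t + h)) ?_)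
      rw [norm_mul]
      exact mul_le_mul_of_nonneg_left (hK t) (norm_nonneg _)
    obtain ⟨r'', K'', h1, h2, h3⟩ := ih r' hmeas K' hbd' hr'i0ne
    exact ⟨r'', K'', h1, by rw [h2, hr'i0deg], h3⟩

end BddTrigAux

open Complex
open scoped ENNReal NNReal

/-- A generalized trigonometric polynomial: `t ↦ ∑ aⱼ exp(i λⱼ t)` with `aⱼ ∈ ℂ`, `λⱼ ∈ ℝ`. -/
def IsTrigPoly (f : ℝ → ℂ) : Prop :=
  ∃ (N : ℕ) (a : Fin N → ℂ) (l : Fin N → ℝ),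
    f = fun t : ℝ => ∑ j, a j * Complex.exp (Complex.I * (l j : ℂ) * (t : ℂ))

/-- Membership in AP: the sup-norm closure, inside bounded continuous functions `ℝ → ℂ`,
of the set of generalized trigonometric polynomials. -/
def APMem (f : ℝ → ℂ) : Prop :=
  Continuous f ∧ (∃ M : ℝ, ∀ t : ℝ, ‖f t‖ ≤ M) ∧
    ∀ ε : ℝ, 0 < ε → ∃ p : ℝ → ℂ, IsTrigPoly p ∧ ∀ t : ℝ, ‖f t - p t‖ ≤ ε

/-- If `F = F_I + F_R`, where `F_I(t) = ∑ pⱼ(t) e^{i ξⱼ t}` (distinct real `ξⱼ`) and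
`F_R(t) = ∑ qⱼ(t) e^{zⱼ t}` (distinct `zⱼ ∈ ℂ` with nonzero real part), and
`sup_{t ∈ ℝ} |F(t)| < M` for some `M > 0`, then all `qⱼ = 0`, all `pⱼ` are constant, and
`F` is a generalized trigonometric polynomial, hence in AP. -/
theorem bounded_implies_trigPoly (n m : ℕ)
    (p : Fin n → Polynomial ℂ) (ξ : Fin n → ℝ)
    (q : Fin m → Polynomial ℂ) (z : Fin m → ℂ)
    (hξ : Function.Injective ξ) (hz : Function.Injective z)
    (hre : ∀ j, (z j).re ≠ 0)
    (F : ℝ → ℂ)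
    (hF : F = fun t : ℝ =>
      (∑ j, (p j).eval (t : ℂ) * Complex.exp (Complex.I * (ξ j : ℂ) * (t : ℂ)))
        + ∑ j, (q j).eval (t : ℂ) * Complex.exp (z j * (t : ℂ)))
    (M : ℝ) (hM : 0 < M)
    (hbd : (⨆ t : ℝ, (‖F t‖₊ : ℝ≥0∞)) < ENNReal.ofReal M) :
    (∀ j, q j = 0) ∧ (∀ j, ∃ a : ℂ, p j = Polynomial.C a) ∧ IsTrigPoly F ∧ APMem F := by
  classical
  open Polynomial in
  set μ : Fin n ⊕ Fin m → ℂ := Sum.elim (fun j => Complex.I * (ξ j : ℂ)) z with hμdef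
  set R : Fin n ⊕ Fin m → Polynomial ℂ := Sum.elim p q with hRdef
  have hμinj : Function.Injective μ := by
    intro a b hab
    match a, b with
    | Sum.inl a, Sum.inl b =>
      simp only [hμdef, Sum.elim_inl] at hab
      have : (ξ a : ℂ) = (ξ b : ℂ) := mul_left_cancel₀ Complex.I_ne_zero hab
      exact congrArg Sum.inl (hξ (by exact_mod_cast this))
    | Sum.inl a, Sum.inr b =>
      exfalso
      simp only [hμdef, Sum.elim_inl, Sum.elim_inr] at hab
      apply hre b
      rw [← hab]
      simp [Complex.mul_re]
    | Sum.inr a, Sum.inl b =>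
      exfalso
      simp only [hμdef, Sum.elim_inl, Sum.elim_inr] at hab
      apply hre a
      rw [hab]
      simp [Complex.mul_re]
    | Sum.inr a, Sum.inr b =>
      simp only [hμdef, Sum.elim_inr] at hab
      exact congrArg Sum.inr (hz hab)
  have hFsum : ∀ t : ℝ, F t = ∑ j, (R j).eval (t : ℂ) * Complex.exp (μ j * (t : ℂ)) := by
    intro t
    rw [hF, Fintype.sum_sum_type]
    simp [hRdef, hμdef]
  have hbound : ∀ t : ℝ, ‖F t‖ ≤ M := by
    intro t
    have h1 : (‖F t‖₊ : ℝ≥0∞) ≤ ⨆ s : ℝ, (‖F s‖₊ : ℝ≥0∞) :=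
      le_iSup (fun s : ℝ => (‖F s‖₊ : ℝ≥0∞)) t
    have h2 := h1.trans_lt hbd
    rw [ENNReal.ofReal, ENNReal.coe_lt_coe] at h2
    calc ‖F t‖ = (‖F t‖₊ : ℝ) := rfl
      _ ≤ (M.toNNReal : ℝ) := by exact_mod_cast h2.le
      _ = M := Real.coe_toNNReal M hM.le
  have hboundsum : ∀ t : ℝ, ‖∑ j, (R j).eval (t : ℂ) * Complex.exp (μ j * (t : ℂ))‖ ≤ M := by
    intro t; rw [← hFsum]; exact hbound t
  -- all q j = 0
  have hq0 : ∀ j, q j = 0 := by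
    intro j
    by_contra hq
    have hRne : R (Sum.inr j) ≠ 0 := by simpa [hRdef] using hq
    obtain ⟨r', K', hr'ne, _, hb'⟩ :=
      BddTrigAux.reduce μ hμinj (Sum.inr j) _ R le_rfl M hboundsum hRne
    have hre0 : (μ (Sum.inr j)).re = 0 :=
      BddTrigAux.single_term r'.natDegree r' le_rfl hr'ne _ K' hb'
    simp only [hμdef, Sum.elim_inr] at hre0
    exact hre j hre0
  -- all p j constant
  have hpc : ∀ j, ∃ a : ℂ, p j = Polynomial.C a := by
    intro j
    by_cases hp : p j = 0
    · exact ⟨0, by rw [hp, map_zero]⟩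
    have hRne : R (Sum.inl j) ≠ 0 := by simpa [hRdef] using hp
    obtain ⟨r', K', hr'ne, hdeg, hb'⟩ :=
      BddTrigAux.reduce μ hμinj (Sum.inl j) _ R le_rfl M hboundsum hRne
    have hre0 : (μ (Sum.inl j)).re = 0 := by
      simp [hμdef, Complex.mul_re]
    have hb'' : ∀ t : ℝ, ‖r'.eval (t : ℂ)‖ ≤ K' := by
      intro t
      have := hb' t
      rwa [BddTrigAux.norm_term, hre0, zero_mul, Real.exp_zero, mul_one] at this
    have hd0 : r'.natDegree = 0 := BddTrigAux.bounded_poly r'.natDegree r' le_rfl K' hb''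
    rw [hdeg] at hd0
    have : (R (Sum.inl j)).natDegree = 0 := hd0
    rw [hRdef, Sum.elim_inl] at this
    exact ⟨(p j).coeff 0, (Polynomial.eq_C_of_natDegree_eq_zero this)⟩
  -- trig poly
  choose a ha using hpc
  have htrig : IsTrigPoly F := by
    refine ⟨n, a, ξ, ?_⟩
    rw [hF]
    funext t
    simp only [hq0, Polynomial.eval_zero, zero_mul, Finset.sum_const_zero, add_zero]
    exact Finset.sum_congr rfl fun j _ => by rw [ha j]; simp
  refine ⟨hq0, fun j => ⟨a j, ha j⟩, htrig, ?_, ?_, ?_⟩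
  · -- continuity
    rw [hF]
    refine Continuous.add ?_ ?_ <;>
      refine continuous_finset_sum _ fun j _ => Continuous.mul
        ((Polynomial.continuous _).comp Complex.continuous_ofReal)
        (Complex.continuous_exp.comp (by continuity))
  · exact ⟨M, fun t => hbound t⟩
  · intro ε hε
    exact ⟨F, htrig, fun t => by simpa using hε.le⟩
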